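/- Let F be a field of characteristic zero, μ ∈ F, and N a nonzero integer. Then there is no rational function a ∈ F(x) with a ≠ 0 satisfying a'/a = −Nμ/x − N, where ' denotes d/dx. -/

import Mathlib

open Polynomial

/-- Coefficient of `derivative p * q` at `p.natDegree + q.natDegree` vanishes. -/
lemma coeff_derivative_mul_top {F : Type*} [Field F] (p q : F[X]) :
    (derivative p * q).coeff (p.natDegree + q.natDegree) = 0 := by
  rcases eq_or_ne (derivative p) 0 with h | h
  · simp [h]
  · apply Polynomial.coeff_eq_zero_of_natDegree_lt
    have hp : p.natDegree ≠ 0 := by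
      intro h0
      obtain ⟨c, rfl⟩ := Polynomial.natDegree_eq_zero.mp h0
      simp at h
    calc (derivative p * q).natDegree ≤ (derivative p).natDegree + q.natDegree :=
          Polynomial.natDegree_mul_le
      _ < p.natDegree + q.natDegree := by
          have := Polynomial.natDegree_derivative_lt hp
          omega

theorem no_rational_solution_log_deriv
    (F : Type*) [Field F] [CharZero F]
    (d : Derivation F (RatFunc F) (RatFunc F)) (hd : d RatFunc.X = 1)
    (μ : F) (N : ℤ) (hN : N ≠ 0) :
    ¬ ∃ a : RatFunc F, a ≠ 0 ∧
      d a / a = -(N : RatFunc F) * RatFunc.C μ / RatFunc.X - (N : RatFunc F) := by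
  rintro ⟨a, ha0, heq⟩
  set φ := algebraMap F[X] (RatFunc F) with hφ
  -- φ agrees with aeval at RatFunc.X
  have hφaeval : ∀ r : F[X], φ r = Polynomial.aeval RatFunc.X r := by
    have : (IsScalarTower.toAlgHom F F[X] (RatFunc F)) =
        (Polynomial.aeval RatFunc.X : F[X] →ₐ[F] RatFunc F) := by
      apply Polynomial.algHom_ext
      simp [RatFunc.algebraMap_X]
    intro r
    exact AlgHom.congr_fun this r
  have hkey : ∀ r : F[X], d (φ r) = φ (derivative r) := by
    intro r
    rw [hφaeval, hφaeval, Derivation.comp_aeval_eq, hd]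
    simp [smul_eq_mul]
  set p := a.num with hp
  set q := a.denom with hq
  have hq0 : q ≠ 0 := a.denom_ne_zero
  have hp0 : p ≠ 0 := RatFunc.num_ne_zero ha0
  have hq0' : φ q ≠ 0 := RatFunc.algebraMap_ne_zero hq0
  have hX0 : (RatFunc.X : RatFunc F) ≠ 0 := by
    rw [← RatFunc.algebraMap_X]
    exact RatFunc.algebraMap_ne_zero Polynomial.X_ne_zero
  have ha : φ q * a = φ p := by
    conv_lhs => rw [← RatFunc.num_div_denom a]
    rw [mul_div_cancel₀ _ hq0']
  have E1 : φ q * d a + a * φ (derivative q) = φ (derivative p) := by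
    have := congrArg d ha
    simp only [Derivation.leibniz, smul_eq_mul, hkey] at this
    exact this
  have E2 : RatFunc.X * d a =
      (-(N : RatFunc F) * RatFunc.C μ - (N : RatFunc F) * RatFunc.X) * a := by
    have h2 : d a = (-(N : RatFunc F) * RatFunc.C μ / RatFunc.X - (N : RatFunc F)) * a := by
      rw [← heq]; field_simp
    have hXS : RatFunc.X * (-(N : RatFunc F) * RatFunc.C μ / RatFunc.X - (N : RatFunc F)) =
        -(N : RatFunc F) * RatFunc.C μ - (N : RatFunc F) * RatFunc.X := by
      field_simp
    rw [h2, ← mul_assoc, hXS]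
  -- main polynomial identity
  have main : φ (Polynomial.X * (derivative p * q - p * derivative q)) =
      φ ((-(N : F[X])) * (Polynomial.C μ + Polynomial.X) * (p * q)) := by
    have hXφ : φ Polynomial.X = RatFunc.X := RatFunc.algebraMap_X
    have hCφ : φ (Polynomial.C μ) = RatFunc.C μ := RatFunc.algebraMap_C μ
    simp only [map_mul, map_sub, map_add, map_neg, map_intCast, hXφ, hCφ]
    linear_combination (-(RatFunc.X : RatFunc F) * φ q) * E1 + (φ q)^2 * E2 -
      ((N : RatFunc F) * (RatFunc.C μ + RatFunc.X) * φ q - RatFunc.X * φ (derivative q)) * ha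
  have hpoly := RatFunc.algebraMap_injective F main
  -- compare coefficients at degree n+1
  set n := p.natDegree + q.natDegree with hn
  have hco := congrArg (fun r : F[X] => r.coeff (n + 1)) hpoly
  simp only [Polynomial.coeff_X_mul] at hco
  have hlhs : (derivative p * q - p * derivative q).coeff n = 0 := by
    rw [Polynomial.coeff_sub, coeff_derivative_mul_top]
    have := coeff_derivative_mul_top q p
    rw [mul_comm] at this
    rw [hn, add_comm p.natDegree q.natDegree, this]
    ring
  have hpq : (p * q).natDegree = n := Polynomial.natDegree_mul hp0 hq0
  have hrhs : ((-(N : F[X])) * (Polynomial.C μ + Polynomial.X) * (p * q)).coeff (n + 1)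
      = -(N : F) * (p * q).coeff n := by
    have hNC : (-(N : F[X])) = Polynomial.C (-(N : F)) := by
      rw [map_neg, Polynomial.C_eq_intCast]
    rw [hNC, mul_assoc, Polynomial.coeff_C_mul, add_mul, Polynomial.coeff_add,
      Polynomial.C_mul' , Polynomial.coeff_smul]
    rw [Polynomial.coeff_X_mul]
    have : (p * q).coeff (n + 1) = 0 := by
      apply Polynomial.coeff_eq_zero_of_natDegree_lt
      omega
    rw [this]
    simp
  rw [hlhs, hrhs] at hco
  have hcn : (p * q).coeff n ≠ 0 := by
    have : (p * q).coeff n = (p * q).leadingCoeff := by rw [Polynomial.leadingCoeff, hpq]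
    rw [this]
    exact Polynomial.leadingCoeff_ne_zero.mpr (mul_ne_zero hp0 hq0)
  have hNF : (N : F) ≠ 0 := Int.cast_ne_zero.mpr hN
  exact (mul_ne_zero (neg_ne_zero.mpr hNF) hcn) hco.symm
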